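/- Consider the system ė_x = −k_x e_x + ω_d(t) e_y + 0, ė_y = −ω_d(t) e_x + v̄(t) (input v̄ in the second channel), under the same hypotheses and with the same W₁ as in the unperturbed case. Then d/dt W₁(t, e(t)) ≤ −(μ/(4T))|e(t)|² + (Tβ²/μ) v̄(t)², where β := 1 + 2ω̄²T + α + ω̄. Consequently V₁ := (2T/μ)W₁ satisfies V̇₁ ≤ −(1/2)|e|² + (γ₁²/2) v̄² with γ₁ := 2Tβ/μ, i.e., the system has L₂-gain at most γ₁ from v̄ to e. -/

import Mathlib

open MeasureTheory intervalIntegral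

set_option maxHeartbeats 1000000

theorem W1_ISS_bound
    (ωd vbar : ℝ → ℝ) (kx ωbar μ T α β γ₁ : ℝ)
    (hkx : 0 < kx) (hT : 0 < T) (hμ : 0 < μ)
    (hC1 : ContDiff ℝ 1 ωd)
    (hωd : ∀ t : ℝ, |ωd t| ≤ ωbar)
    (hωd' : ∀ t : ℝ, |deriv ωd t| ≤ ωbar)
    (hPE : ∀ t : ℝ, 0 ≤ t → μ ≤ ∫ s in t..(t + T), (ωd s) ^ 2)
    (hα : max ωbar ((2 * ωbar ^ 2 / kx) * (1 + (T / (4 * μ)) * (1 + kx) ^ 2)) ≤ α)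
    (hβ : β = 1 + 2 * ωbar ^ 2 * T + α + ωbar)
    (hγ₁ : γ₁ = 2 * T * β / μ)
    (Υ : ℝ → ℝ)
    (hΥ : ∀ t : ℝ, Υ t = 1 + 2 * ωbar ^ 2 * T -
      (2 / T) * ∫ m in t..(t + T), (∫ s in t..m, (ωd s) ^ 2))
    (W₁ : ℝ → ℝ → ℝ → ℝ)
    (hW₁ : ∀ t exv eyv : ℝ,
      W₁ t exv eyv = (1 / 2) * (Υ t + α) * (exv ^ 2 + eyv ^ 2) - ωd t * exv * eyv)
    (ex ey : ℝ → ℝ)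
    (hex : ∀ t : ℝ, HasDerivAt ex (-kx * ex t + ωd t * ey t) t)
    (hey : ∀ t : ℝ, HasDerivAt ey (-(ωd t) * ex t + vbar t) t) :
    ∀ t : ℝ, 0 ≤ t → ∃ d : ℝ,
      HasDerivAt (fun s => W₁ s (ex s) (ey s)) d t ∧
      d ≤ -(μ / (4 * T)) * ((ex t) ^ 2 + (ey t) ^ 2) + (T * β ^ 2 / μ) * (vbar t) ^ 2 ∧
      (2 * T / μ) * d ≤ -(1 / 2) * ((ex t) ^ 2 + (ey t) ^ 2) + (γ₁ ^ 2 / 2) * (vbar t) ^ 2 := by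
  have hT0 : T ≠ 0 := ne_of_gt hT
  have hμ0 : μ ≠ 0 := ne_of_gt hμ
  have hωbar0 : 0 ≤ ωbar := le_trans (abs_nonneg _) (hωd 0)
  have hα0 : 0 ≤ α := le_trans hωbar0 (le_trans (le_max_left _ _) hα)
  have hgc : Continuous (fun s : ℝ => (ωd s) ^ 2) := (hC1.continuous).pow 2
  set P : ℝ → ℝ := fun x => ∫ s in (0:ℝ)..x, (ωd s) ^ 2 with hPdef
  have hPd : ∀ x : ℝ, HasDerivAt P ((ωd x) ^ 2) x := fun x =>
    intervalIntegral.integral_hasDerivAt_right (hgc.intervalIntegrable 0 x)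
      (hgc.stronglyMeasurableAtFilter _ _) hgc.continuousAt
  have hPc : Continuous P :=
    Differentiable.continuous (fun x => (hPd x).differentiableAt)
  set Q : ℝ → ℝ := fun x => ∫ s in (0:ℝ)..x, P s with hQdef
  have hQd : ∀ x : ℝ, HasDerivAt Q (P x) x := fun x =>
    intervalIntegral.integral_hasDerivAt_right (hPc.intervalIntegrable 0 x)
      (hPc.stronglyMeasurableAtFilter _ _) hPc.continuousAt
  have hPsub : ∀ a b : ℝ, (∫ s in a..b, (ωd s) ^ 2) = P b - P a := fun a b =>
    (intervalIntegral.integral_interval_sub_left (hgc.intervalIntegrable 0 b)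
      (hgc.intervalIntegrable 0 a)).symm
  have hQsub : ∀ a b : ℝ, (∫ s in a..b, P s) = Q b - Q a := fun a b =>
    (intervalIntegral.integral_interval_sub_left (hPc.intervalIntegrable 0 b)
      (hPc.intervalIntegrable 0 a)).symm
  have hΥ2 : ∀ u : ℝ, Υ u = 1 + 2 * ωbar ^ 2 * T - (2 / T) * (Q (u + T) - Q u - T * P u) := by
    intro u
    rw [hΥ u]
    have h1 : (∫ m in u..(u + T), (∫ s in u..m, (ωd s) ^ 2))
        = ∫ m in u..(u + T), (P m - P u) :=
      intervalIntegral.integral_congr (fun m _ => hPsub u m)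
    rw [h1, intervalIntegral.integral_sub (hPc.intervalIntegrable u (u + T))
      intervalIntegrable_const, hQsub, intervalIntegral.integral_const, smul_eq_mul]
    ring
  intro t ht
  have hωdd : HasDerivAt ωd (deriv ωd t) t := ((hC1.differentiable one_ne_zero) t).hasDerivAt
  have hQT : HasDerivAt (fun u : ℝ => Q (u + T)) (P (t + T)) t := by
    have h := (hQd (t + T)).comp t ((hasDerivAt_id t).add_const T)
    simp only [id_eq, mul_one] at h
    exact h
  have hUd : HasDerivAt
      (fun s : ℝ => 1 + 2 * ωbar ^ 2 * T - (2 / T) * (Q (s + T) - Q s - T * P s) + α)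
      (-(2 / T) * (P (t + T) - P t - T * (ωd t) ^ 2)) t := by
    have h1 : HasDerivAt (fun u : ℝ => Q (u + T) - Q u - T * P u)
        (P (t + T) - P t - T * (ωd t) ^ 2) t :=
      (hQT.sub (hQd t)).sub ((hPd t).const_mul T)
    have h2 := ((h1.const_mul (2 / T)).const_sub (1 + 2 * ωbar ^ 2 * T)).add_const α
    refine h2.congr_deriv ?_
    ring
  have hE : HasDerivAt (fun s : ℝ => ex s ^ 2 + ey s ^ 2)
      ((2:ℕ) * ex t ^ 1 * (-kx * ex t + ωd t * ey t)
        + (2:ℕ) * ey t ^ 1 * (-(ωd t) * ex t + vbar t)) t :=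
    ((hex t).pow 2).add ((hey t).pow 2)
  -- abbreviations
  set x := ex t with hxdef
  set y := ey t with hydef
  set v := vbar t with hvdef
  set w := ωd t with hwdef
  set w' := deriv ωd t with hw'def
  set u := Υ t with hudef
  set I := P (t + T) - P t with hIdef
  set D0 : ℝ :=
    (-(1 / T) * I + w ^ 2) * (x ^ 2 + y ^ 2)
      + (u + α) * (x * (-kx * x + w * y) + y * (-w * x + v))
      - (w' * x * y + w * ((-kx * x + w * y) * y + x * (-w * x + v))) with hD0def
  have hD : HasDerivAt (fun s => W₁ s (ex s) (ey s)) D0 t := by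
    have h1 : (fun s => W₁ s (ex s) (ey s)) = fun s =>
        (1 / 2) * ((1 + 2 * ωbar ^ 2 * T - (2 / T) * (Q (s + T) - Q s - T * P s) + α)
          * (ex s ^ 2 + ey s ^ 2)) - ωd s * ex s * ey s := by
      funext s
      rw [hW₁, hΥ2]
      ring
    rw [h1]
    have h2 := ((hUd.mul hE).const_mul (1 / 2 : ℝ)).sub ((hωdd.mul (hex t)).mul (hey t))
    refine h2.congr_deriv ?_
    rw [hD0def, hudef, hΥ2 t]
    push_cast
    simp only [Pi.mul_apply, ← hxdef, ← hydef, ← hwdef, ← hvdef]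
    field_simp
    ring
  -- basic bounds
  have hI : μ ≤ I := by rw [hIdef, ← hPsub t (t + T)]; exact hPE t ht
  have hPmono : ∀ m, t ≤ m → P t ≤ P m := by
    intro m hm
    have h0 : 0 ≤ ∫ s in t..m, (ωd s) ^ 2 :=
      intervalIntegral.integral_nonneg hm (fun s _ => sq_nonneg _)
    rw [hPsub t m] at h0
    linarith
  have hPub : ∀ m, t ≤ m → m ≤ t + T → P m - P t ≤ T * ωbar ^ 2 := by
    intro m hm hm'
    have h1 : (∫ s in t..m, (ωd s) ^ 2) ≤ ∫ _s in t..m, ωbar ^ 2 := by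
      apply intervalIntegral.integral_mono_on hm (hgc.intervalIntegrable t m)
        intervalIntegrable_const
      intro s _
      have h2 := hωd s
      nlinarith [abs_nonneg (ωd s), sq_abs (ωd s)]
    rw [hPsub t m, intervalIntegral.integral_const, smul_eq_mul] at h1
    nlinarith [sq_nonneg ωbar]
  have hF0 : 0 ≤ Q (t + T) - Q t - T * P t := by
    have h1 : (∫ _m in t..(t + T), P t) ≤ ∫ m in t..(t + T), P m :=
      intervalIntegral.integral_mono_on (by linarith) intervalIntegrable_const
        (hPc.intervalIntegrable _ _) (fun m hm => hPmono m hm.1)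
    rw [hQsub, intervalIntegral.integral_const, smul_eq_mul] at h1
    have h2 : t + T - t = T := by ring
    rw [h2] at h1
    linarith
  have hFub : Q (t + T) - Q t - T * P t ≤ T * (T * ωbar ^ 2) := by
    have h1 : (∫ m in t..(t + T), P m) ≤ ∫ _m in t..(t + T), (P t + T * ωbar ^ 2) :=
      intervalIntegral.integral_mono_on (by linarith) (hPc.intervalIntegrable _ _)
        intervalIntegrable_const (fun m hm => by linarith [hPub m hm.1 hm.2])
    rw [hQsub, intervalIntegral.integral_const, smul_eq_mul] at h1
    have h2 : t + T - t = T := by ring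
    rw [h2] at h1
    nlinarith
  have hu0 : 0 ≤ u := by
    have h1 : (2 / T) * (Q (t + T) - Q t - T * P t) ≤ (2 / T) * (T * (T * ωbar ^ 2)) :=
      mul_le_mul_of_nonneg_left hFub (by positivity)
    have h2 : (2 / T) * (T * (T * ωbar ^ 2)) = 2 * T * ωbar ^ 2 := by
      field_simp
    rw [h2] at h1
    rw [hudef, hΥ2 t]
    linarith
  have huub : u ≤ 1 + 2 * ωbar ^ 2 * T := by
    have h1 : 0 ≤ (2 / T) * (Q (t + T) - Q t - T * P t) :=
      mul_nonneg (by positivity) hF0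
    rw [hudef, hΥ2 t]
    linarith
  -- pointwise bounds on w, w'
  have hw2 : w ^ 2 ≤ ωbar ^ 2 := by
    rw [← sq_abs]
    exact pow_le_pow_left₀ (abs_nonneg _) (hωd t) 2
  have hw'2 : w' ^ 2 ≤ ωbar ^ 2 := by
    rw [← sq_abs]
    exact pow_le_pow_left₀ (abs_nonneg _) (hωd' t) 2
  have hK2 : (kx * w - w') ^ 2 ≤ (1 + kx) ^ 2 * ωbar ^ 2 := by
    nlinarith [sq_nonneg (w + w'), sq_nonneg (w - w'), hkx.le,
      mul_nonneg hkx.le hkx.le, mul_nonneg hkx.le (sub_nonneg.2 hw2),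
      mul_nonneg (mul_nonneg hkx.le hkx.le) (sub_nonneg.2 hw2),
      mul_nonneg hkx.le (sq_nonneg (w + w'))]
  have huA2 : (u + α) ^ 2 ≤ (1 + 2 * ωbar ^ 2 * T + α) ^ 2 :=
    pow_le_pow_left₀ (by linarith) (by linarith) 2
  have hb5 : 4 * μ * ωbar ^ 2 + T * ωbar ^ 2 * (1 + kx) ^ 2 ≤ 2 * μ * α * kx := by
    have h2 : (2 * ωbar ^ 2 / kx) * (1 + (T / (4 * μ)) * (1 + kx) ^ 2) ≤ α :=
      le_trans (le_max_right _ _) hα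
    have h3 := mul_le_mul_of_nonneg_right h2 hkx.le
    have h4 : (2 * ωbar ^ 2 / kx) * (1 + (T / (4 * μ)) * (1 + kx) ^ 2) * kx
        = 2 * ωbar ^ 2 + T * ωbar ^ 2 * (1 + kx) ^ 2 / (2 * μ) := by
      field_simp; ring
    rw [h4] at h3
    have h6 := mul_le_mul_of_nonneg_left h3 (by positivity : (0:ℝ) ≤ 2 * μ)
    have h7 : 2 * μ * (2 * ωbar ^ 2 + T * ωbar ^ 2 * (1 + kx) ^ 2 / (2 * μ))
        = 4 * μ * ωbar ^ 2 + T * ωbar ^ 2 * (1 + kx) ^ 2 := by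
      field_simp; ring
    rw [h7] at h6
    linarith
  -- the cleared-denominator form of D0
  have hD0eq : 4 * T * μ * D0 =
      8 * T * μ * w ^ 2 * x ^ 2 - 4 * μ * I * (x ^ 2 + y ^ 2)
        - 4 * T * μ * (u + α) * kx * x ^ 2 + 4 * T * μ * (kx * w - w') * (x * y)
        + 4 * T * μ * (u + α) * (y * v) - 4 * T * μ * w * (x * v) := by
    rw [hD0def]
    field_simp
    ring
  -- intermediate polynomial inequalities
  have hS0 : (0:ℝ) ≤ x ^ 2 + y ^ 2 := by positivity
  have i1 : 4 * μ * μ * (x ^ 2 + y ^ 2) ≤ 4 * μ * I * (x ^ 2 + y ^ 2) := by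
    linarith [mul_nonneg (mul_nonneg (by positivity : (0:ℝ) ≤ 4 * μ)
      (sub_nonneg.2 hI)) hS0]
  have i2 : 4 * T * μ * α * kx * x ^ 2 ≤ 4 * T * μ * (u + α) * kx * x ^ 2 := by
    nlinarith [mul_nonneg (mul_nonneg (mul_nonneg (mul_nonneg
      (by positivity : (0:ℝ) ≤ 4 * T) hμ.le) hu0) hkx.le) (sq_nonneg x)]
  have i3 : 4 * T * μ * (kx * w - w') * (x * y)
      ≤ 2 * μ ^ 2 * y ^ 2 + 2 * T ^ 2 * (1 + kx) ^ 2 * ωbar ^ 2 * x ^ 2 := by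
    linarith [sq_nonneg (μ * y - T * (kx * w - w') * x),
      mul_nonneg (mul_nonneg (by positivity : (0:ℝ) ≤ 2 * T ^ 2)
        (sub_nonneg.2 hK2)) (sq_nonneg x)]
  have i4 : 4 * T * μ * (u + α) * (y * v)
      ≤ μ ^ 2 * y ^ 2 + 4 * T ^ 2 * (1 + 2 * ωbar ^ 2 * T + α) ^ 2 * v ^ 2 := by
    linarith [sq_nonneg (μ * y - 2 * T * (u + α) * v),
      mul_nonneg (mul_nonneg (by positivity : (0:ℝ) ≤ 4 * T ^ 2)
        (sub_nonneg.2 huA2)) (sq_nonneg v)]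
  have i5 : -(4 * T * μ * w * (x * v)) ≤ μ ^ 2 * x ^ 2 + 4 * T ^ 2 * ωbar ^ 2 * v ^ 2 := by
    linarith [sq_nonneg (μ * x + 2 * T * w * v),
      mul_nonneg (mul_nonneg (by positivity : (0:ℝ) ≤ 4 * T ^ 2)
        (sub_nonneg.2 hw2)) (sq_nonneg v)]
  have i6 : 8 * T * μ * w ^ 2 * x ^ 2 ≤ 8 * T * μ * ωbar ^ 2 * x ^ 2 := by
    linarith [mul_nonneg (mul_nonneg (mul_nonneg (by positivity : (0:ℝ) ≤ 8 * T)
      hμ.le) (sub_nonneg.2 hw2)) (sq_nonneg x)]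
  have i7 : 8 * T * μ * ωbar ^ 2 * x ^ 2 + 2 * T ^ 2 * (1 + kx) ^ 2 * ωbar ^ 2 * x ^ 2
      ≤ 4 * T * μ * α * kx * x ^ 2 := by
    linarith [mul_le_mul_of_nonneg_left hb5
      (by positivity : (0:ℝ) ≤ 2 * T * x ^ 2)]
  have i8 : 4 * T ^ 2 * (1 + 2 * ωbar ^ 2 * T + α) ^ 2 * v ^ 2
      + 4 * T ^ 2 * ωbar ^ 2 * v ^ 2 ≤ 4 * T ^ 2 * β ^ 2 * v ^ 2 := by
    have hA0 : (0:ℝ) ≤ 1 + 2 * ωbar ^ 2 * T + α := by positivity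
    rw [hβ]
    linarith [mul_nonneg (mul_nonneg (mul_nonneg
      (by positivity : (0:ℝ) ≤ 8 * T ^ 2) hA0) hωbar0) (sq_nonneg v)]
  have hmain : 4 * T * μ * D0 ≤ 4 * T * μ *
      (-(μ / (4 * T)) * (x ^ 2 + y ^ 2) + (T * β ^ 2 / μ) * v ^ 2) := by
    have hRHS : 4 * T * μ * (-(μ / (4 * T)) * (x ^ 2 + y ^ 2) + (T * β ^ 2 / μ) * v ^ 2)
        = -(μ ^ 2) * (x ^ 2 + y ^ 2) + 4 * T ^ 2 * β ^ 2 * v ^ 2 := by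
      field_simp
    rw [hD0eq, hRHS]
    linarith [i1, i2, i3, i4, i5, i6, i7, i8,
      mul_nonneg (sq_nonneg μ) (sq_nonneg x), mul_nonneg (sq_nonneg μ) (sq_nonneg y)]
  have hfirst : D0 ≤ -(μ / (4 * T)) * (x ^ 2 + y ^ 2) + (T * β ^ 2 / μ) * v ^ 2 :=
    le_of_mul_le_mul_left hmain (by positivity)
  refine ⟨D0, hD, hfirst, ?_⟩
  have h3 := mul_le_mul_of_nonneg_left hfirst (by positivity : (0:ℝ) ≤ 2 * T / μ)
  have h4 : (2 * T / μ) * (-(μ / (4 * T)) * (x ^ 2 + y ^ 2) + (T * β ^ 2 / μ) * v ^ 2)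
      = -(1 / 2) * (x ^ 2 + y ^ 2) + (γ₁ ^ 2 / 2) * v ^ 2 := by
    rw [hγ₁]
    field_simp
    ring
  linarith
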